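/- Let ℓ ≥ 1, let x = (x_1,…,x_ℓ) ∈ X^ℓ have pairwise distinct entries, and let y = (y_1,…,y_ℓ) ∈ Y^ℓ. Let P_H be the orthogonal projection of ℂ[HF] onto the span of the basis vectors e_H with H(x_i) = y_i for all i, and let P_D be the orthogonal projection of ℂ[DB] onto the span of the basis vectors e_D with D(x_i) = y_i for all i. Then for every Π ∈ ℂ[HF] with ‖Π‖ = 1: ‖P_H Π‖ ≤ ‖P_D (Comp Π)‖ + √(ℓ/M). -/

import Mathlib

noncomputable section

/-- the single-register entries `c(d, y)` of `Comp`: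
`c(⊥, y) = 1/√M` and `c(u, y) = δ_{u,y} − 1/M` for `u, y ∈ Y`
(`Ȳ = Y ∪ {⊥}` is modeled by `Option Y`, with `⊥ = none`) -/
def compEntry (Y : Type*) [Fintype Y] [DecidableEq Y] : Option Y → Y → ℂ
  | none, _ => ((Real.sqrt (Fintype.card Y) : ℝ) : ℂ)⁻¹
  | some u, y => (if u = y then (1 : ℂ) else 0) - (Fintype.card Y : ℂ)⁻¹

lemma compEntry_conj {Y : Type*} [Fintype Y] [DecidableEq Y] (d : Option Y) (u : Y) :
    (starRingEnd ℂ) (compEntry Y d u) = compEntry Y d u := by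
  cases d <;> simp [compEntry, apply_ite]

lemma compEntry_orth {Y : Type*} [Fintype Y] [DecidableEq Y] (hM : 0 < Fintype.card Y) (u u' : Y) :
    ∑ d : Option Y, compEntry Y d u * compEntry Y d u' = if u = u' then 1 else 0 := by
  have hM' : ((Fintype.card Y : ℝ)) ≠ 0 := by positivity
  have hMc : ((Fintype.card Y : ℂ)) ≠ 0 := by exact_mod_cast hM'
  rw [Fintype.sum_option]
  have h0 : compEntry Y none u * compEntry Y none u' = (Fintype.card Y : ℂ)⁻¹ := by
    simp only [compEntry]
    rw [← mul_inv]
    norm_cast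
    rw [Real.mul_self_sqrt (by positivity)]
    push_cast
    ring
  rw [h0]
  have h1 : ∀ v : Y, compEntry Y (some v) u * compEntry Y (some v) u' =
      (if v = u then (1:ℂ) else 0) * (if v = u' then 1 else 0)
      - (if v = u then (1:ℂ) else 0) * (Fintype.card Y : ℂ)⁻¹
      - (Fintype.card Y : ℂ)⁻¹ * (if v = u' then 1 else 0)
      + (Fintype.card Y : ℂ)⁻¹ * (Fintype.card Y : ℂ)⁻¹ := by
    intro v; simp only [compEntry]; ring
  simp only [h1]
  rw [Finset.sum_add_distrib, Finset.sum_sub_distrib, Finset.sum_sub_distrib]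
  simp [Finset.sum_ite_eq, Finset.sum_ite_eq', Finset.mul_sum, ite_mul, mul_ite,
    mul_inv_cancel₀ hMc, Finset.card_univ]
  by_cases h : u = u'
  · simp [h]; field_simp; ring
  · have h' : ¬ u' = u := fun hh => h hh.symm
    simp [h, h']; field_simp; ring

lemma euclid_eq_sum_single {ι : Type*} [Fintype ι] [DecidableEq ι] (v : EuclideanSpace ℂ ι) :
    v = ∑ i, v i • EuclideanSpace.single i 1 := by
  ext j
  rw [WithLp.ofLp_sum, Finset.sum_apply]
  simp [EuclideanSpace.single_apply]

lemma norm_sq_euclid {ι : Type*} [Fintype ι] (v : EuclideanSpace ℂ ι) :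
    ‖v‖ ^ 2 = ∑ i, Complex.normSq (v i) := by
  rw [EuclideanSpace.norm_eq, Real.sq_sqrt (by positivity)]
  congr 1; ext i
  rw [Complex.sq_norm]

lemma exists_sum_equiv {X : Type*} [Fintype X] {ℓ : ℕ} (x : Fin ℓ → X)
    (hx : Function.Injective x) :
    ∃ e : (Fin ℓ ⊕ ↥((Set.range x)ᶜ)) ≃ X,
      (∀ i, e (Sum.inl i) = x i) ∧ (∀ k : ↥((Set.range x)ᶜ), e (Sum.inr k) = (k : X)) := by
  classical
  exact ⟨(Equiv.sumCongr (Equiv.ofInjective x hx) (Equiv.refl _)).trans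
      (Equiv.Set.sumCompl (Set.range x)), fun i => by simp, fun k => by simp⟩

lemma exists_pi_equiv {X Y : Type*} [Fintype X] {ℓ : ℕ} (x : Fin ℓ → X)
    (e : (Fin ℓ ⊕ ↥((Set.range x)ᶜ)) ≃ X) :
    ∃ Φ : ((Fin ℓ → Y) × (↥((Set.range x)ᶜ) → Y)) ≃ (X → Y),
      ∀ (z : Fin ℓ → Y) g (a : X), Φ (z, g) a = Sum.elim z g (e.symm a) :=
  ⟨(Equiv.sumArrowEquivProdArrow _ _ Y).symm.trans (Equiv.arrowCongr e (Equiv.refl Y)),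
    fun z g a => rfl⟩

lemma prod_split {X K : Type*} [Fintype X] [Fintype K] {ℓ : ℕ} (x : Fin ℓ → X)
    (e : (Fin ℓ ⊕ K) ≃ X) {M : Type*} [CommMonoid M] (f : X → M) :
    ∏ a, f a = (∏ i, f (e (Sum.inl i))) * ∏ k, f (e (Sum.inr k)) := by
  rw [← Equiv.prod_comp e f, Fintype.prod_sum_type]

lemma sum_split {A B C : Type*} [Fintype A] [Fintype B] [Fintype C]
    (Φ : (A × B) ≃ C) {R : Type*} [AddCommMonoid R] (F : C → R) :
    ∑ c, F c = ∑ a, ∑ b, F (Φ (a, b)) := by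
  rw [← Equiv.sum_comp Φ F, Fintype.sum_prod_type]

set_option maxHeartbeats 3200000 in
open Classical in
theorem stmt_3 {X Y : Type*} [Fintype X] [Nonempty X]
    [Fintype Y] [DecidableEq Y] [AddCommGroup Y]
    (ℓ : ℕ) (hℓ : 1 ≤ ℓ)
    -- pairwise distinct `x_1, …, x_ℓ` and `y_1, …, y_ℓ`
    (x : Fin ℓ → X) (hx : Function.Injective x) (y : Fin ℓ → Y)
    -- the isometry `Comp : ℂ[HF] → ℂ[DB]`, given by its matrix entries
    (Comp : EuclideanSpace ℂ (X → Y) →L[ℂ] EuclideanSpace ℂ (X → Option Y))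
    (hComp : ∀ (H : X → Y) (D : X → Option Y),
      inner (𝕜 := ℂ) (EuclideanSpace.single D 1) (Comp (EuclideanSpace.single H 1)) =
        ∏ a : X, compEntry Y (D a) (H a))
    -- `P_H`: the projection onto the span of the `e_H` with `H (x i) = y i` for all `i`
    (PH : EuclideanSpace ℂ (X → Y) →L[ℂ] EuclideanSpace ℂ (X → Y))
    (hPH : ∀ H : X → Y, PH (EuclideanSpace.single H 1) =
      if ∀ i, H (x i) = y i then EuclideanSpace.single H 1 else 0)
    -- `P_D`: the projection onto the span of the `e_D` with `D (x i) = y i` for all `i`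
    (PD : EuclideanSpace ℂ (X → Option Y) →L[ℂ] EuclideanSpace ℂ (X → Option Y))
    (hPD : ∀ D : X → Option Y, PD (EuclideanSpace.single D 1) =
      if ∀ i, D (x i) = some (y i) then EuclideanSpace.single D 1 else 0)
    (Pi : EuclideanSpace ℂ (X → Y)) (hPi : ‖Pi‖ = 1) :
    ‖PH Pi‖ ≤ ‖PD (Comp Pi)‖ + Real.sqrt (ℓ / Fintype.card Y) := by
  classical
  -- coordinates of PH Pi
  have hPHc : ∀ H0 : X → Y, PH Pi H0 = if ∀ i, H0 (x i) = y i then Pi H0 else 0 := by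
    intro H0
    conv_lhs => rw [euclid_eq_sum_single Pi, map_sum]
    rw [WithLp.ofLp_sum, Finset.sum_apply]
    simp only [map_smul, hPH]
    rw [Finset.sum_eq_single H0]
    · by_cases h : ∀ i, H0 (x i) = y i <;> simp [h, EuclideanSpace.single_apply]
    · intro H _ hne
      by_cases h : ∀ i, H (x i) = y i <;>
        simp [h, EuclideanSpace.single_apply, Ne.symm hne]
    · simp
  -- coordinates of PD v
  have hPDc : ∀ (v : EuclideanSpace ℂ (X → Option Y)) (D0 : X → Option Y),
      PD v D0 = if ∀ i, D0 (x i) = some (y i) then v D0 else 0 := by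
    intro v D0
    conv_lhs => rw [euclid_eq_sum_single v, map_sum]
    rw [WithLp.ofLp_sum, Finset.sum_apply]
    simp only [map_smul, hPD]
    rw [Finset.sum_eq_single D0]
    · by_cases h : ∀ i, D0 (x i) = some (y i) <;> simp [h, EuclideanSpace.single_apply]
    · intro D _ hne
      by_cases h : ∀ i, D (x i) = some (y i) <;>
        simp [h, EuclideanSpace.single_apply, Ne.symm hne]
    · simp
  -- coordinates of Comp v
  have hCompc : ∀ (v : EuclideanSpace ℂ (X → Y)) (D : X → Option Y),
      Comp v D = ∑ H : X → Y, v H * ∏ a : X, compEntry Y (D a) (H a) := by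
    intro v D
    have h1 : Comp v D = inner (𝕜 := ℂ) (EuclideanSpace.single D 1) (Comp v) := by
      rw [EuclideanSpace.inner_single_left]; simp
    rw [h1]
    conv_lhs => rw [euclid_eq_sum_single v, map_sum]
    rw [inner_sum]
    congr 1; ext H
    rw [map_smul, inner_smul_right, hComp]
  have hM : 0 < Fintype.card Y := Fintype.card_pos
  have hMr : (0:ℝ) < Fintype.card Y := by exact_mod_cast hM
  have hsq0 : 0 ≤ Real.sqrt (ℓ / Fintype.card Y) := Real.sqrt_nonneg _
  by_cases hα0 : ‖PH Pi‖ = 0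
  · rw [hα0]; positivity
  have hαpos : 0 < ‖PH Pi‖ := lt_of_le_of_ne (norm_nonneg _) (Ne.symm hα0)
  set α := ‖PH Pi‖ with hαdef
  set ψ : (X → Y) → ℂ := fun H => (if ∀ i, H (x i) = y i then Pi H else 0) / (α:ℂ) with hψdef
  have hαc : (α:ℂ) ≠ 0 := by exact_mod_cast hα0
  have hψ0 : ∀ H : X → Y, ¬ (∀ i, H (x i) = y i) → ψ H = 0 := by
    intro H h; simp [hψdef, h]
  have hα_sq : ∑ H : X → Y, Complex.normSq (if ∀ i, H (x i) = y i then Pi H else 0) = α ^ 2 := by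
    rw [hαdef, norm_sq_euclid]
    congr 1; ext H
    rw [hPHc H]
  have hψ_sq : ∑ H : X → Y, Complex.normSq (ψ H) = 1 := by
    simp only [hψdef, Complex.normSq_div]
    rw [← Finset.sum_div]
    rw [hα_sq]
    have : Complex.normSq (α:ℂ) = α ^ 2 := by
      rw [Complex.normSq_ofReal]; ring
    rw [this, div_self (by positivity)]
  -- modified entries
  set E : X → Option Y → Y → ℂ := fun a d u =>
    if a ∈ Set.range x then (if d = some u then 1 else 0) else compEntry Y d u with hEdef
  set G : X → Y → Y → ℂ := fun a u u' =>
    if a ∈ Set.range x then compEntry Y (some u) u' else (if u = u' then 1 else 0) with hGdef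
  have hEconj : ∀ a d u, (starRingEnd ℂ) (E a d u) = E a d u := by
    intro a d u
    by_cases h : a ∈ Set.range x
    · simp only [hEdef, if_pos h]
      by_cases h2 : d = some u <;> simp [h2]
    · simp only [hEdef, if_neg h]
      exact compEntry_conj d u
  have hGconj : ∀ a u u', (starRingEnd ℂ) (G a u u') = G a u u' := by
    intro a u u'
    by_cases h : a ∈ Set.range x
    · simp only [hGdef, if_pos h]
      exact compEntry_conj (some u) u'
    · simp only [hGdef, if_neg h]
      by_cases h2 : u = u' <;> simp [h2]
  have hEG : ∀ (a : X) (u u' : Y),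
      ∑ d : Option Y, E a d u * compEntry Y d u' = G a u u' := by
    intro a u u'
    by_cases h : a ∈ Set.range x
    · simp only [hEdef, hGdef, h, if_true, ite_mul, one_mul, zero_mul]
      exact Finset.sum_ite_eq' Finset.univ (some u) (fun d => compEntry Y d u') |>.trans (by simp)
    · simp only [hEdef, hGdef, h, if_false]
      exact compEntry_orth hM u u'
  have hEE : ∀ (a : X) (u u' : Y),
      ∑ d : Option Y, E a d u * E a d u' = if u = u' then 1 else 0 := by
    intro a u u'
    by_cases h : a ∈ Set.range x
    · simp only [hEdef, if_pos h, ite_mul, one_mul, zero_mul]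
      rw [Finset.sum_ite_eq' Finset.univ (some u) (fun d => if d = some u' then (1:ℂ) else 0)]
      simp
    · simp only [hEdef, if_neg h]
      exact compEntry_orth hM u u'
  -- the vectors φ and ξ
  set φ : EuclideanSpace ℂ (X → Option Y) :=
    WithLp.toLp 2 (fun D => ∑ H : X → Y, ψ H * ∏ a : X, E a (D a) (H a)) with hφdef
  set ξ : EuclideanSpace ℂ (X → Y) :=
    WithLp.toLp 2 (fun H' => ∑ H : X → Y, ψ H * ∏ a : X, G a (H a) (H' a)) with hξdef
  -- the key double-sum exchange
  have key : ∀ (c1 c2 : X → Option Y → Y → ℂ) (F1 F2 : (X → Y) → ℂ),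
      ∑ D : X → Option Y,
        (∑ H : X → Y, F1 H * ∏ a : X, c1 a (D a) (H a)) *
        (∑ H' : X → Y, F2 H' * ∏ a : X, c2 a (D a) (H' a))
      = ∑ H : X → Y, ∑ H' : X → Y, F1 H * F2 H' *
          ∏ a : X, (∑ d : Option Y, c1 a d (H a) * c2 a d (H' a)) := by
    intro c1 c2 F1 F2
    have step1 : ∀ D : X → Option Y,
        (∑ H : X → Y, F1 H * ∏ a : X, c1 a (D a) (H a)) *
        (∑ H' : X → Y, F2 H' * ∏ a : X, c2 a (D a) (H' a))
        = ∑ H : X → Y, ∑ H' : X → Y, F1 H * F2 H' *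
            ∏ a : X, (c1 a (D a) (H a) * c2 a (D a) (H' a)) := by
      intro D
      rw [Fintype.sum_mul_sum]
      congr 1; ext H; congr 1; ext H'
      rw [Finset.prod_mul_distrib]; ring
    simp only [step1]
    rw [Finset.sum_comm]
    congr 1; ext H
    rw [Finset.sum_comm]
    congr 1; ext H'
    rw [← Finset.mul_sum]
    congr 1
    exact (Fintype.prod_sum (fun a d => c1 a d (H a) * c2 a d (H' a))).symm
  -- conj of φ and ξ coordinates
  have hφconj : ∀ D, (starRingEnd ℂ) (φ D) =
      ∑ H : X → Y, (starRingEnd ℂ) (ψ H) * ∏ a : X, E a (D a) (H a) := by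
    intro D
    rw [hφdef]
    rw [map_sum]
    congr 1; ext H
    rw [map_mul, map_prod]
    congr 1
    exact Finset.prod_congr rfl (fun a _ => hEconj a (D a) (H a))
  have hξconj : ∀ H', (starRingEnd ℂ) (ξ H') =
      ∑ H : X → Y, (starRingEnd ℂ) (ψ H) * ∏ a : X, G a (H a) (H' a) := by
    intro H'
    rw [hξdef]
    rw [map_sum]
    congr 1; ext H
    rw [map_mul, map_prod]
    congr 1
    exact Finset.prod_congr rfl (fun a _ => hGconj a (H a) (H' a))
  -- C1 : ⟪φ, Comp Pi⟫ = ⟪ξ, Pi⟫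
  have hC1 : inner (𝕜 := ℂ) φ (Comp Pi) = inner (𝕜 := ℂ) ξ Pi := by
    rw [PiLp.inner_apply, PiLp.inner_apply]
    simp only [RCLike.inner_apply']
    calc ∑ D : X → Option Y, (starRingEnd ℂ) (φ D) * (Comp Pi) D
        = ∑ D : X → Option Y,
            (∑ H : X → Y, (starRingEnd ℂ) (ψ H) * ∏ a : X, E a (D a) (H a)) *
            (∑ H' : X → Y, Pi H' * ∏ a : X, compEntry Y (D a) (H' a)) := by
          congr 1; ext D; rw [hφconj, hCompc]
      _ = ∑ H : X → Y, ∑ H' : X → Y, (starRingEnd ℂ) (ψ H) * Pi H' *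
            ∏ a : X, (∑ d : Option Y, E a d (H a) * compEntry Y d (H' a)) :=
          key _ _ _ _
      _ = ∑ H' : X → Y, (starRingEnd ℂ) (ξ H') * Pi H' := by
          rw [Finset.sum_comm]
          congr 1; ext H'
          rw [hξconj, Finset.sum_mul]
          congr 1; ext H
          rw [mul_assoc, mul_comm (Pi H'), ← mul_assoc]
          congr 2
          exact Finset.prod_congr rfl (fun a _ => hEG a (H a) (H' a))
  -- C4 : ‖φ‖ = 1
  have hφφ : inner (𝕜 := ℂ) φ φ = 1 := by
    rw [PiLp.inner_apply]
    simp only [RCLike.inner_apply']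
    calc ∑ D : X → Option Y, (starRingEnd ℂ) (φ D) * φ D
        = ∑ D : X → Option Y,
            (∑ H : X → Y, (starRingEnd ℂ) (ψ H) * ∏ a : X, E a (D a) (H a)) *
            (∑ H' : X → Y, ψ H' * ∏ a : X, E a (D a) (H' a)) := by
          congr 1; ext D; rw [hφconj, hφdef]
      _ = ∑ H : X → Y, ∑ H' : X → Y, (starRingEnd ℂ) (ψ H) * ψ H' *
            ∏ a : X, (∑ d : Option Y, E a d (H a) * E a d (H' a)) := key _ _ _ _
      _ = ∑ H : X → Y, (starRingEnd ℂ) (ψ H) * ψ H := by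
          congr 1; ext H
          rw [Finset.sum_eq_single H]
          · simp only [hEE]
            simp
          · intro H' _ hne
            have : ∃ a, H a ≠ H' a := Function.ne_iff.mp (Ne.symm hne)
            obtain ⟨a, ha⟩ := this
            simp only [hEE]
            rw [Finset.prod_eq_zero (Finset.mem_univ a) (by simp [ha])]
            ring
          · simp
      _ = 1 := by
          have : ∀ H : X → Y, (starRingEnd ℂ) (ψ H) * ψ H = ((Complex.normSq (ψ H) : ℝ) : ℂ) := by
            intro H; rw [Complex.normSq_eq_conj_mul_self]
          simp only [this]
          rw [← Complex.ofReal_sum, hψ_sq]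
          simp
  have hφnorm : ‖φ‖ = 1 := by
    have h2 : (‖φ‖ : ℝ) ^ 2 = 1 := by
      have := inner_self_eq_norm_sq (𝕜 := ℂ) φ
      rw [hφφ] at this
      simpa using this.symm
    nlinarith [norm_nonneg φ]
  let ψv : EuclideanSpace ℂ (X → Y) := WithLp.toLp 2 ψ
  have hψvdef : ∀ H, ψv H = ψ H := fun _ => rfl
  -- C5 : φ is supported on good databases
  have hφsupp : ∀ D : X → Option Y, ¬ (∀ i, D (x i) = some (y i)) → φ D = 0 := by
    intro D hD
    rw [hφdef]
    apply Finset.sum_eq_zero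
    intro H _
    by_cases hH : ∀ i, H (x i) = y i
    · push_neg at hD
      obtain ⟨i, hi⟩ := hD
      have hfac : E (x i) (D (x i)) (H (x i)) = 0 := by
        simp only [hEdef, if_pos (Set.mem_range_self i)]
        rw [hH i, if_neg hi]
      rw [Finset.prod_eq_zero (Finset.mem_univ (x i)) hfac, mul_zero]
    · rw [hψ0 H hH, zero_mul]
  have hC5 : inner (𝕜 := ℂ) φ (PD (Comp Pi)) = inner (𝕜 := ℂ) φ (Comp Pi) := by
    rw [PiLp.inner_apply, PiLp.inner_apply]
    congr 1; ext D
    simp only [RCLike.inner_apply']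
    rw [hPDc]
    by_cases h : ∀ i, D (x i) = some (y i)
    · rw [if_pos h]
    · rw [if_neg h, hφsupp D h]
      simp
  -- C2 : ⟪ψ, Pi⟫ = α
  have hψ1 : ∀ H : X → Y, (∀ i, H (x i) = y i) → ψ H = Pi H / (α:ℂ) := by
    intro H h; simp [hψdef, h]
  have hC2 : inner (𝕜 := ℂ) ψv Pi = (α : ℂ) := by
    rw [PiLp.inner_apply]
    simp only [RCLike.inner_apply']
    have hterm : ∀ H : X → Y, (starRingEnd ℂ) (ψv H) * Pi H
        = ((Complex.normSq (ψ H) : ℝ) : ℂ) * (α:ℂ) := by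
      intro H
      rw [Complex.normSq_eq_conj_mul_self]
      by_cases h : ∀ i, H (x i) = y i
      · rw [hψvdef H, hψ1 H h, map_div₀, Complex.conj_ofReal]
        field_simp
      · rw [hψvdef H, hψ0 H h]
        simp
    rw [Finset.sum_congr rfl (fun H _ => hterm H), ← Finset.sum_mul,
      ← Complex.ofReal_sum, hψ_sq]
    simp
  -- the equivalence X ≃ Fin ℓ ⊕ (range x)ᶜ
  obtain ⟨e, he1, he2⟩ := exists_sum_equiv x hx
  have hes1 : ∀ i, e.symm (x i) = Sum.inl i := by
    intro i; rw [Equiv.symm_apply_eq, he1]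
  have hes2 : ∀ k : ↥((Set.range x)ᶜ), e.symm (k : X) = Sum.inr k := by
    intro k; rw [Equiv.symm_apply_eq, he2]
  obtain ⟨Φ, hΦval⟩ := exists_pi_equiv (Y := Y) x e
  have hΦ1 : ∀ z g (i : Fin ℓ), Φ (z, g) (x i) = z i := by
    intro z g i; rw [hΦval, hes1]; rfl
  have hΦ2 : ∀ z g (k : ↥((Set.range x)ᶜ)), Φ (z, g) (k : X) = g k := by
    intro z g k; rw [hΦval, hes2]; rfl
  -- splitting products over X
  have hprodsplit : ∀ f : X → ℂ, ∏ a : X, f a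
      = (∏ i, f (x i)) * ∏ k : ↥((Set.range x)ᶜ), f (k : X) := by
    intro f
    rw [prod_split x e f,
      show (∏ i, f (e (Sum.inl i))) = ∏ i, f (x i) from
        Finset.prod_congr rfl (fun i _ => by rw [he1]),
      show (∏ k : ↥((Set.range x)ᶜ), f (e (Sum.inr k)))
          = ∏ k : ↥((Set.range x)ᶜ), f (k : X) from
        Finset.prod_congr rfl (fun k _ => by rw [he2])]
  -- splitting sums over functions X → Y
  have hsumsplitC : ∀ (F : (X → Y) → ℂ),
      ∑ H : X → Y, F H = ∑ z : Fin ℓ → Y, ∑ g : ↥((Set.range x)ᶜ) → Y, F (Φ (z, g)) := by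
    intro F
    exact sum_split Φ F
  have hsumsplitR : ∀ (F : (X → Y) → ℝ),
      ∑ H : X → Y, F H = ∑ z : Fin ℓ → Y, ∑ g : ↥((Set.range x)ᶜ) → Y, F (Φ (z, g)) := by
    intro F
    exact sum_split Φ F
  -- goodness in the new coordinates
  have hgood : ∀ z g, (∀ i, Φ (z, g) (x i) = y i) ↔ z = y := by
    intro z g
    constructor
    · intro h; funext i; rw [← hΦ1 z g i]; exact h i
    · intro h; subst h; intro i; exact hΦ1 _ _ _
  have hψval : ∀ z g, ψ (Φ (z, g)) = (if z = y then (1:ℂ) else 0) * ψ (Φ (y, g)) := by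
    intro z g
    by_cases h : z = y
    · subst h; rw [if_pos rfl, one_mul]
    · rw [if_neg h, zero_mul]
      exact hψ0 _ (fun hc => h ((hgood z g).mp hc))
  -- the delta product
  have hdelta : ∀ (g₀ g : ↥((Set.range x)ᶜ) → Y),
      (∏ k : ↥((Set.range x)ᶜ), if g₀ k = g k then (1:ℂ) else 0) = if g₀ = g then 1 else 0 := by
    intro g₀ g
    by_cases h : g₀ = g
    · subst h; simp
    · rw [if_neg h]
      obtain ⟨k, hk⟩ := Function.ne_iff.mp h
      exact Finset.prod_eq_zero (Finset.mem_univ k) (by rw [if_neg hk])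
  -- value of ξ in the new coordinates
  have hξval : ∀ (z : Fin ℓ → Y) (g : ↥((Set.range x)ᶜ) → Y),
      ξ (Φ (z, g)) = ψ (Φ (y, g)) * ∏ i, compEntry Y (some (y i)) (z i) := by
    intro z g
    simp only [hξdef]
    rw [hsumsplitC (fun H => ψ H * ∏ a, G a (H a) (Φ (z, g) a))]
    have hterm : ∀ z₀ g₀, ψ (Φ (z₀, g₀)) * ∏ a, G a (Φ (z₀, g₀) a) (Φ (z, g) a)
        = ((if z₀ = y then (1:ℂ) else 0) * (if g₀ = g then 1 else 0)) *
          (ψ (Φ (y, g)) * ∏ i, compEntry Y (some (y i)) (z i)) := by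
      intro z₀ g₀
      have step1 : ∏ a, G a (Φ (z₀, g₀) a) (Φ (z, g) a)
          = (∏ i, compEntry Y (some (z₀ i)) (z i)) * (if g₀ = g then 1 else 0) := by
        rw [hprodsplit (fun a => G a (Φ (z₀, g₀) a) (Φ (z, g) a))]
        congr 1
        · refine Finset.prod_congr rfl (fun i _ => ?_)
          rw [hΦ1, hΦ1]
          simp only [hGdef, if_pos (Set.mem_range_self i)]
        · rw [← hdelta g₀ g]
          refine Finset.prod_congr rfl (fun k _ => ?_)
          rw [hΦ2, hΦ2]
          simp only [hGdef, if_neg k.2]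
      rw [step1, hψval z₀ g₀]
      by_cases hz : z₀ = y
      · subst hz
        by_cases hg : g₀ = g
        · subst hg
          rw [if_pos rfl, if_pos rfl]
          ring
        · rw [if_neg hg]
          ring
      · rw [if_neg hz]
        ring
    rw [Finset.sum_congr rfl (fun z₀ _ => Finset.sum_congr rfl (fun g₀ _ => hterm z₀ g₀))]
    have inner1 : ∀ z₀ : Fin ℓ → Y,
        ∑ g₀ : ↥((Set.range x)ᶜ) → Y,
          ((if z₀ = y then (1:ℂ) else 0) * (if g₀ = g then 1 else 0)) *
            (ψ (Φ (y, g)) * ∏ i, compEntry Y (some (y i)) (z i))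
        = (if z₀ = y then (1:ℂ) else 0) *
            (ψ (Φ (y, g)) * ∏ i, compEntry Y (some (y i)) (z i)) := by
      intro z₀
      have : ∑ g₀ : ↥((Set.range x)ᶜ) → Y, (if g₀ = g then (1:ℂ) else 0) = 1 := by
        rw [Finset.sum_ite_eq' Finset.univ g (fun _ => (1:ℂ))]
        simp
      calc ∑ g₀ : ↥((Set.range x)ᶜ) → Y,
            ((if z₀ = y then (1:ℂ) else 0) * (if g₀ = g then 1 else 0)) *
              (ψ (Φ (y, g)) * ∏ i, compEntry Y (some (y i)) (z i))
          = (∑ g₀ : ↥((Set.range x)ᶜ) → Y, (if g₀ = g then (1:ℂ) else 0)) *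
              ((if z₀ = y then (1:ℂ) else 0) *
                (ψ (Φ (y, g)) * ∏ i, compEntry Y (some (y i)) (z i))) := by
            rw [Finset.sum_mul]
            exact Finset.sum_congr rfl (fun g₀ _ => by ring)
        _ = _ := by rw [this, one_mul]
    rw [Finset.sum_congr rfl (fun z₀ _ => inner1 z₀)]
    rw [← Finset.sum_mul]
    rw [Finset.sum_ite_eq' Finset.univ y (fun _ => (1:ℂ))]
    simp
  -- real single-register quantities
  set ρ : (Fin ℓ → Y) → ℝ :=
    (fun z => ∏ i, ((if y i = z i then (1:ℝ) else 0) - (Fintype.card Y : ℝ)⁻¹)) with hρdef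
  have hfac : ∀ u v : Y, compEntry Y (some u) v
      = (((if u = v then (1:ℝ) else 0) - (Fintype.card Y : ℝ)⁻¹ : ℝ) : ℂ) := by
    intro u v
    simp only [compEntry]
    by_cases h : u = v <;> push_cast <;> simp [h]
  have hWcast : ∀ z : Fin ℓ → Y,
      (∏ i, compEntry Y (some (y i)) (z i)) = ((ρ z : ℝ) : ℂ) := by
    intro z
    rw [Finset.prod_congr rfl (fun i _ => hfac (y i) (z i)), hρdef,
      ← Complex.ofReal_prod]
  have hdiffval : ∀ z g, ξ (Φ (z, g)) - ψ (Φ (z, g))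
      = ψ (Φ (y, g)) * (((ρ z - (if z = y then 1 else 0) : ℝ)) : ℂ) := by
    intro z g
    rw [hξval, hψval z g, hWcast]
    by_cases h : z = y
    · subst h
      rw [if_pos rfl, if_pos rfl]
      push_cast
      ring
    · rw [if_neg h, if_neg h]
      push_cast
      ring
  -- the g-sum is 1
  have hsum_g : ∑ g : ↥((Set.range x)ᶜ) → Y, Complex.normSq (ψ (Φ (y, g))) = 1 := by
    have h1 := hψ_sq
    rw [hsumsplitR (fun H => Complex.normSq (ψ H))] at h1
    have h2 : ∀ z g, Complex.normSq (ψ (Φ (z, g)))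
        = (if z = y then (1:ℝ) else 0) * Complex.normSq (ψ (Φ (y, g))) := by
      intro z g
      rw [hψval, Complex.normSq_mul]
      by_cases h : z = y <;> simp [h]
    rw [Finset.sum_congr rfl (fun z _ => Finset.sum_congr rfl (fun g _ => h2 z g))] at h1
    have h3 : ∑ z : Fin ℓ → Y, ∑ g : ↥((Set.range x)ᶜ) → Y,
          (if z = y then (1:ℝ) else 0) * Complex.normSq (ψ (Φ (y, g)))
        = (∑ z : Fin ℓ → Y, if z = y then (1:ℝ) else 0) *
            ∑ g : ↥((Set.range x)ᶜ) → Y, Complex.normSq (ψ (Φ (y, g))) := by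
      rw [Finset.sum_mul]
      exact Finset.sum_congr rfl (fun z _ => (Finset.mul_sum _ _ _).symm)
    rw [h3, Finset.sum_ite_eq' Finset.univ y (fun _ => (1:ℝ))] at h1
    simpa using h1
  -- the z-sum is at most ℓ/M
  have hdel : ∑ z : Fin ℓ → Y, (if z = y then (1:ℝ) else 0) = 1 := by
    rw [Finset.sum_ite_eq' Finset.univ y (fun _ => (1:ℝ))]
    simp
  have hsum_z : ∑ z : Fin ℓ → Y, (ρ z - (if z = y then (1:ℝ) else 0))^2
      ≤ (ℓ : ℝ) / (Fintype.card Y : ℝ) := by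
    have hexp : ∀ z, (ρ z - (if z = y then (1:ℝ) else 0))^2
        = ρ z^2 - 2 * (ρ z * (if z = y then (1:ℝ) else 0)) + (if z = y then (1:ℝ) else 0) := by
      intro z; by_cases h : z = y <;> simp [h] <;> ring
    rw [Finset.sum_congr rfl (fun z _ => hexp z), Finset.sum_add_distrib,
      Finset.sum_sub_distrib]
    have hone : ∀ i : Fin ℓ, ∑ v : Y,
        ((if y i = v then (1:ℝ) else 0) - (Fintype.card Y : ℝ)⁻¹)^2
        = 1 - (Fintype.card Y : ℝ)⁻¹ := by
      intro i
      have hv : ∀ v : Y, ((if y i = v then (1:ℝ) else 0) - (Fintype.card Y : ℝ)⁻¹)^2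
          = (if y i = v then (1:ℝ) else 0)
            - 2 * (Fintype.card Y : ℝ)⁻¹ * (if y i = v then (1:ℝ) else 0)
            + ((Fintype.card Y : ℝ)⁻¹)^2 := by
        intro v; by_cases h : y i = v <;> simp [h] <;> ring
      rw [Finset.sum_congr rfl (fun v _ => hv v), Finset.sum_add_distrib,
        Finset.sum_sub_distrib]
      have e1 : ∑ v : Y, (if y i = v then (1:ℝ) else 0) = 1 := by
        rw [Finset.sum_ite_eq Finset.univ (y i) (fun _ => (1:ℝ))]
        simp
      have e2 : ∑ v : Y, 2 * (Fintype.card Y : ℝ)⁻¹ * (if y i = v then (1:ℝ) else 0)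
          = 2 * (Fintype.card Y : ℝ)⁻¹ := by
        rw [← Finset.mul_sum, e1, mul_one]
      have e3 : ∑ _v : Y, ((Fintype.card Y : ℝ)⁻¹)^2 = (Fintype.card Y : ℝ)⁻¹ := by
        rw [Finset.sum_const, Finset.card_univ, nsmul_eq_mul]
        field_simp
      rw [e1, e2, e3]
      field_simp
      ring
    have hsq : ∑ z : Fin ℓ → Y, ρ z ^ 2 = (1 - (Fintype.card Y : ℝ)⁻¹)^ℓ := by
      have hz2 : ∀ z : Fin ℓ → Y, ρ z^2
          = ∏ i, ((if y i = z i then (1:ℝ) else 0) - (Fintype.card Y : ℝ)⁻¹)^2 := by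
        intro z; rw [hρdef, ← Finset.prod_pow]
      rw [Finset.sum_congr rfl (fun z _ => hz2 z),
        ← Fintype.prod_sum (fun i v => ((if y i = v then (1:ℝ) else 0) - (Fintype.card Y : ℝ)⁻¹)^2),
        Finset.prod_congr rfl (fun i _ => hone i), Finset.prod_const, Finset.card_univ,
        Fintype.card_fin]
    have hmid : ∑ z : Fin ℓ → Y, ρ z * (if z = y then (1:ℝ) else 0)
        = (1 - (Fintype.card Y : ℝ)⁻¹)^ℓ := by
      have : ∀ z : Fin ℓ → Y, ρ z * (if z = y then (1:ℝ) else 0)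
          = if z = y then ρ z else 0 := by
        intro z; by_cases h : z = y <;> simp [h]
      refine (Finset.sum_congr rfl (fun z _ => this z)).trans ?_
      rw [Finset.sum_ite_eq' Finset.univ y ρ]
      simp only [Finset.mem_univ, if_true]
      rw [hρdef]
      beta_reduce
      have hfac1 : ∀ i : Fin ℓ, ((if y i = y i then (1:ℝ) else 0) - (Fintype.card Y : ℝ)⁻¹)
          = 1 - (Fintype.card Y : ℝ)⁻¹ := fun i => by rw [if_pos rfl]
      rw [Finset.prod_congr rfl (fun i _ => hfac1 i), Finset.prod_const, Finset.card_univ,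
        Fintype.card_fin]
    have hber : 1 - (ℓ:ℝ) * (Fintype.card Y : ℝ)⁻¹ ≤ (1 - (Fintype.card Y : ℝ)⁻¹)^ℓ := by
      have hinv1 : (Fintype.card Y : ℝ)⁻¹ ≤ 1 := by
        rw [inv_le_one_iff₀]
        right
        exact_mod_cast hM
      have := one_add_mul_le_pow (a := -(Fintype.card Y : ℝ)⁻¹) (by linarith) ℓ
      have h' : 1 + (ℓ:ℝ) * (-(Fintype.card Y : ℝ)⁻¹) ≤ (1 + -(Fintype.card Y : ℝ)⁻¹)^ℓ := this
      rw [← sub_eq_add_neg] at h'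
      linarith
    have hmid2 : ∑ z : Fin ℓ → Y, 2 * (ρ z * (if z = y then (1:ℝ) else 0))
        = 2 * (1 - (Fintype.card Y : ℝ)⁻¹)^ℓ := by
      rw [← Finset.mul_sum, hmid]
    rw [hsq, hmid2, hdel, div_eq_mul_inv]
    linarith
  -- norm of the difference
  have hnormdiff : ‖ξ - ψv‖ ≤ Real.sqrt ((ℓ:ℝ) / (Fintype.card Y : ℝ)) := by
    have hco : ∀ H', (ξ - ψv) H' = ξ H' - ψ H' := fun _ => rfl
    have h2 : ‖ξ - ψv‖^2 ≤ (ℓ:ℝ) / (Fintype.card Y : ℝ) := by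
      rw [norm_sq_euclid]
      calc ∑ H', Complex.normSq ((ξ - ψv) H')
          = ∑ z : Fin ℓ → Y, ∑ g : ↥((Set.range x)ᶜ) → Y,
              Complex.normSq ((ξ - ψv) (Φ (z, g))) :=
            hsumsplitR (fun H' => Complex.normSq ((ξ - ψv) H'))
        _ = ∑ z : Fin ℓ → Y, ∑ g : ↥((Set.range x)ᶜ) → Y,
              Complex.normSq (ψ (Φ (y, g))) * (ρ z - (if z = y then (1:ℝ) else 0))^2 := by
            refine Finset.sum_congr rfl (fun z _ => Finset.sum_congr rfl (fun g _ => ?_))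
            rw [hco, hdiffval, Complex.normSq_mul, Complex.normSq_ofReal]
            ring
        _ = (∑ g : ↥((Set.range x)ᶜ) → Y, Complex.normSq (ψ (Φ (y, g)))) *
              ∑ z : Fin ℓ → Y, (ρ z - (if z = y then (1:ℝ) else 0))^2 := by
            rw [Finset.sum_comm, Finset.sum_mul]
            exact Finset.sum_congr rfl (fun g _ => (Finset.mul_sum _ _ _).symm)
        _ ≤ 1 * ((ℓ:ℝ) / (Fintype.card Y : ℝ)) := by
            rw [hsum_g, one_mul, one_mul]
            exact hsum_z
        _ = (ℓ:ℝ) / (Fintype.card Y : ℝ) := one_mul _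
    have h3 := Real.sqrt_le_sqrt h2
    rwa [Real.sqrt_sq (norm_nonneg _)] at h3
  -- final assembly
  have hA : inner (𝕜 := ℂ) ξ Pi - (α:ℂ) = inner (𝕜 := ℂ) (ξ - ψv) Pi := by
    rw [inner_sub_left, hC2]
  have hB : ‖inner (𝕜 := ℂ) ξ Pi - (α:ℂ)‖ ≤ Real.sqrt ((ℓ:ℝ) / (Fintype.card Y : ℝ)) := by
    rw [hA]
    calc ‖inner (𝕜 := ℂ) (ξ - ψv) Pi‖ ≤ ‖ξ - ψv‖ * ‖Pi‖ := norm_inner_le_norm _ _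
      _ = ‖ξ - ψv‖ := by rw [hPi, mul_one]
      _ ≤ _ := hnormdiff
  have hC : α ≤ ‖inner (𝕜 := ℂ) ξ Pi‖ + Real.sqrt ((ℓ:ℝ) / (Fintype.card Y : ℝ)) := by
    have h1 : (α:ℂ) = inner (𝕜 := ℂ) ξ Pi - (inner (𝕜 := ℂ) ξ Pi - (α:ℂ)) := by ring
    calc α = ‖((α:ℝ):ℂ)‖ := by
          rw [Complex.norm_real, Real.norm_eq_abs, abs_of_pos hαpos]
      _ ≤ ‖inner (𝕜 := ℂ) ξ Pi‖ + ‖inner (𝕜 := ℂ) ξ Pi - (α:ℂ)‖ := by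
          conv_lhs => rw [h1]
          exact norm_sub_le _ _
      _ ≤ _ := by linarith [hB]
  have hD : ‖inner (𝕜 := ℂ) ξ Pi‖ ≤ ‖PD (Comp Pi)‖ := by
    rw [← hC1, ← hC5]
    calc ‖inner (𝕜 := ℂ) φ (PD (Comp Pi))‖ ≤ ‖φ‖ * ‖PD (Comp Pi)‖ := norm_inner_le_norm _ _
      _ = ‖PD (Comp Pi)‖ := by rw [hφnorm, one_mul]
  linarith [hC, hD]


end
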